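/- Let n, m, r be natural numbers with m < n and r + n + 1 ≤ 2m. Let α, β, γ, δ be partial functions from Fin n to Fin n, each of rank r + 1, such that α·β = γ·δ and rank(α·β) = r. Then, in the free semigroup on the alphabet X = {μ ∈ PT_n : r + 1 ≤ rank(μ) ≤ r + 2}, the pair (x_α·x_β, x_γ·x_δ) lies in the congruence generated by R = {(x_μ·x_ν, x_{μν}) : r + 1 ≤ rank(μ), rank(ν), rank(μ·ν) ≤ r + 2}; that is, x_α x_β = x_γ x_δ is a consequence of R. -/

import Mathlib

set_option linter.unusedSectionVars false
set_option maxHeartbeats 1000000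


/-- The partial transformation monoid on `Fin n`: all partial functions from `Fin n`
to `Fin n`, with `α * β` meaning "first apply `α`, then `β`". -/
def PTn (n : ℕ) : Type := PFun (Fin n) (Fin n)

/-- The underlying partial function of a partial transformation. -/
def PTn.toPFun {n : ℕ} (f : PTn n) : PFun (Fin n) (Fin n) := f

instance (n : ℕ) : Semigroup (PTn n) where
  mul f g := (g.toPFun.comp f.toPFun : PFun (Fin n) (Fin n))
  mul_assoc _ _ _ := (PFun.comp_assoc _ _ _).symm

/-- The rank of a partial transformation: the cardinality of its image. -/
noncomputable def ptrank {n : ℕ} (f : PTn n) : ℕ := Set.ncard f.toPFun.ran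

theorem ptrank_mul_le {n : ℕ} (f g : PTn n) : ptrank (f * g) ≤ ptrank g := by
  apply Set.ncard_le_ncard _ (Set.toFinite _)
  intro y hy
  obtain ⟨x, hx⟩ := hy
  rw [show (f * g).toPFun x = (f.toPFun x).bind g.toPFun from rfl] at hx
  obtain ⟨z, _, hz⟩ := Part.mem_bind_iff.mp hx
  exact ⟨z, hz⟩

/-- The ideal `I_m` of the partial transformation monoid: all partial maps of rank at
most `m`, as a subsemigroup. -/
def PTideal (n m : ℕ) : Subsemigroup (PTn n) where
  carrier := {a | ptrank a ≤ m}
  mul_mem' := fun {a b} _ hb => le_trans (ptrank_mul_le a b) hb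

/-- The alphabet `X_{i,m}`: partial transformations `a` with `i ≤ rank a ≤ m`. -/
abbrev PTX (n m i : ℕ) : Type := {a : PTn n // i ≤ ptrank a ∧ ptrank a ≤ m}

/-- The relations `R_{i,m}` of the restricted Cayley table presentation. -/
def PTRel (n m i : ℕ) : FreeSemigroup (PTX n m i) → FreeSemigroup (PTX n m i) → Prop :=
  fun u v =>
    ∃ (a b : PTn n) (ha : i ≤ ptrank a ∧ ptrank a ≤ m)
      (hb : i ≤ ptrank b ∧ ptrank b ≤ m) (hab : i ≤ ptrank (a * b) ∧ ptrank (a * b) ≤ m),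
      u = FreeSemigroup.of (⟨a, ha⟩ : PTX n m i) * FreeSemigroup.of (⟨b, hb⟩ : PTX n m i) ∧
      v = FreeSemigroup.of (⟨a * b, hab⟩ : PTX n m i)


namespace Stmt16
open Finset

variable {n : ℕ}

noncomputable def og (f : PTn n) : Fin n → Option (Fin n) :=
  fun x => @Part.toOption _ (f x) (Classical.propDecidable _)

def pt (g : Fin n → Option (Fin n)) : PTn n := fun x => Part.ofOption (g x)

lemma mem_pt {g : Fin n → Option (Fin n)} {x y : Fin n} : y ∈ pt g x ↔ g x = some y := by
  simp [pt, Part.mem_ofOption, Option.mem_def]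

lemma pt_og (f : PTn n) : pt (og f) = f := by
  funext x
  apply Part.ext
  intro y
  rw [mem_pt, og]
  exact @Part.toOption_eq_some_iff _ _ (Classical.propDecidable _) _

lemma pt_injective : Function.Injective (pt (n := n)) := by
  intro g h e
  funext x
  cases hg : g x with
  | none =>
    cases hh : h x with
    | none => rfl
    | some y =>
      have : y ∈ pt g x := by rw [e]; exact mem_pt.2 hh
      rw [mem_pt, hg] at this; cases this
  | some y =>
    have : y ∈ pt h x := by rw [← e]; exact mem_pt.2 hg
    rw [mem_pt] at this; rw [this]

lemma mul_def (f g : PTn n) : f * g = fun x => (f x).bind g := rfl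

lemma pt_mul (g h : Fin n → Option (Fin n)) :
    pt g * pt h = pt (fun x => (g x).bind h) := by
  funext x
  show ((pt g) x).bind (pt h) = _
  cases hg : g x with
  | none =>
    apply Part.ext; intro y
    show y ∈ (Part.ofOption (g x)).bind (fun z => Part.ofOption (h z)) ↔ _
    simp [pt, hg, Part.mem_bind_iff, Part.mem_ofOption]
  | some a =>
    apply Part.ext; intro y
    show y ∈ (Part.ofOption (g x)).bind (fun z => Part.ofOption (h z)) ↔ _
    simp [pt, hg, Part.mem_bind_iff, Part.mem_ofOption]

def img (g : Fin n → Option (Fin n)) : Finset (Fin n) :=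
  univ.biUnion fun x => (g x).toFinset

lemma mem_img {g : Fin n → Option (Fin n)} {y : Fin n} :
    y ∈ img g ↔ ∃ x, g x = some y := by
  simp [img, Option.mem_toFinset, Option.mem_def]

lemma rank_pt (g : Fin n → Option (Fin n)) : ptrank (pt g) = (img g).card := by
  rw [ptrank, show (pt g).toPFun.ran = ↑(img g) from ?_, Set.ncard_coe_finset]
  ext y
  simp only [PFun.ran, Set.mem_setOf_eq, mem_coe, mem_img]
  constructor
  · rintro ⟨x, hx⟩; exact ⟨x, mem_pt.1 hx⟩
  · rintro ⟨x, hx⟩; exact ⟨x, mem_pt.2 hx⟩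

lemma rank_le {g : Fin n → Option (Fin n)} {s : Finset (Fin n)}
    (h : ∀ x y, g x = some y → y ∈ s) : ptrank (pt g) ≤ s.card := by
  rw [rank_pt]
  exact card_le_card (fun y hy => by obtain ⟨x, hx⟩ := mem_img.1 hy; exact h x y hx)

lemma rank_ge {g : Fin n → Option (Fin n)} {s : Finset (Fin n)}
    (h : ∀ y ∈ s, ∃ x, g x = some y) : s.card ≤ ptrank (pt g) := by
  rw [rank_pt]
  exact card_le_card (fun y hy => mem_img.2 (h y hy))

section Ctx

variable (gε : Fin n → Option (Fin n)) (u₁ u₂ u₃ : Fin n)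

def Lg (S₁ S₂ : Finset (Fin n)) : Fin n → Option (Fin n) :=
  fun x => if x ∈ S₁ then some u₁ else if x ∈ S₂ then some u₃ else gε x

def Rg (o₁ o₂ o₃ : Option (Fin n)) : Fin n → Option (Fin n) :=
  fun y => if y ∈ img gε then some y
    else if y = u₁ then o₁ else if y = u₂ then o₂ else if y = u₃ then o₃ else none

variable {gε u₁ u₂ u₃}
variable (hu₁ : u₁ ∉ img gε) (hu₂ : u₂ ∉ img gε) (hu₃ : u₃ ∉ img gε)
  (h12 : u₁ ≠ u₂) (h13 : u₁ ≠ u₃) (h23 : u₂ ≠ u₃)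

section Evals
variable {o₁ o₂ o₃ : Option (Fin n)}

lemma Rg_T {t : Fin n} (ht : t ∈ img gε) : Rg gε u₁ u₂ u₃ o₁ o₂ o₃ t = some t := by
  simp [Rg, ht]

include hu₁ in
lemma Rg_u₁ : Rg gε u₁ u₂ u₃ o₁ o₂ o₃ u₁ = o₁ := by
  simp [Rg, hu₁]

include hu₂ h12 in
lemma Rg_u₂ : Rg gε u₁ u₂ u₃ o₁ o₂ o₃ u₂ = o₂ := by
  simp [Rg, hu₂, h12.symm]

include hu₃ h13 h23 in
lemma Rg_u₃ : Rg gε u₁ u₂ u₃ o₁ o₂ o₃ u₃ = o₃ := by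
  simp [Rg, hu₃, h13.symm, h23.symm]

include hu₁ hu₂ hu₃ h12 h13 h23 in
lemma LR (S₁ S₂ : Finset (Fin n)) (o₁ o₂ o₃ : Option (Fin n)) :
    pt (Lg gε u₁ u₃ S₁ S₂) * pt (Rg gε u₁ u₂ u₃ o₁ o₂ o₃) =
      pt (fun x => if x ∈ S₁ then o₁ else if x ∈ S₂ then o₃ else gε x) := by
  rw [pt_mul]
  refine congrArg pt (funext fun x => ?_)
  by_cases hx1 : x ∈ S₁
  · simp [Lg, hx1, Rg_u₁ hu₁]
  · by_cases hx2 : x ∈ S₂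
    · simp [Lg, hx1, hx2, Rg_u₃ hu₃ h13 h23]
    · simp only [Lg, if_neg hx1, if_neg hx2]
      cases hg : gε x with
      | none => rfl
      | some t =>
        have ht : t ∈ img gε := mem_img.2 ⟨x, hg⟩
        simp [Rg_T ht]

include hu₁ hu₂ hu₃ h12 h13 h23 in
lemma RR (o₁ o₂ o₃ p₁ p₂ p₃ : Option (Fin n)) :
    pt (Rg gε u₁ u₂ u₃ o₁ o₂ o₃) * pt (Rg gε u₁ u₂ u₃ p₁ p₂ p₃) =
      pt (Rg gε u₁ u₂ u₃ (o₁.bind (Rg gε u₁ u₂ u₃ p₁ p₂ p₃))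
        (o₂.bind (Rg gε u₁ u₂ u₃ p₁ p₂ p₃)) (o₃.bind (Rg gε u₁ u₂ u₃ p₁ p₂ p₃))) := by
  rw [pt_mul]
  refine congrArg pt (funext fun y => ?_)
  by_cases hy : y ∈ img gε
  · simp [Rg, hy]
  · simp only [Rg, if_neg hy]
    by_cases hy1 : y = u₁
    · simp [hy1]
    · by_cases hy2 : y = u₂
      · simp [hy1, hy2, if_neg (Ne.symm h12)]
      · by_cases hy3 : y = u₃
        · simp [hy1, hy2, hy3, if_neg (Ne.symm h13), if_neg (Ne.symm h23)]
        · simp [hy1, hy2, hy3]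

end Evals

section Ranks

variable {r : ℕ} (hT : (img gε).card = r)

include hT in
lemma rank_Lg_le (S₁ S₂ : Finset (Fin n)) :
    ptrank (pt (Lg gε u₁ u₃ S₁ S₂)) ≤ r + 2 := by
  have h := rank_le (g := Lg gε u₁ u₃ S₁ S₂) (s := insert u₁ (insert u₃ (img gε))) ?_
  · refine h.trans ?_
    calc (insert u₁ (insert u₃ (img gε))).card ≤ (insert u₃ (img gε)).card + 1 :=
          card_insert_le _ _
      _ ≤ (img gε).card + 1 + 1 := by have := card_insert_le u₃ (img gε); omega
      _ = r + 2 := by omega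
  · intro x y hxy
    simp only [Lg] at hxy
    split_ifs at hxy with h1 h2
    · cases hxy; simp
    · cases hxy; simp
    · simp [mem_img.2 ⟨x, hxy⟩]

include hT in
lemma rank_Lg_ge_full {S₁ S₂ : Finset (Fin n)}
    (hw : ∀ t ∈ img gε, ∃ x, x ∉ S₁ ∧ x ∉ S₂ ∧ gε x = some t)
    (hne : S₁.Nonempty ∨ S₂.Nonempty) (hu₁' : u₁ ∉ img gε) (hu₃' : u₃ ∉ img gε) :
    r + 1 ≤ ptrank (pt (Lg gε u₁ u₃ S₁ S₂)) := by
  rcases hS1 : S₁.eq_empty_or_nonempty with hS1e | ⟨x₀, hx₀⟩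
  case inl =>
    have hS2 : S₂.Nonempty := by
      rcases hne with h | h
      · rw [hS1e] at h; exact absurd h (by simp)
      · exact h
    obtain ⟨x₀, hx₀⟩ := hS2
    have h := rank_ge (g := Lg gε u₁ u₃ S₁ S₂) (s := insert u₃ (img gε)) ?_
    · rw [card_insert_of_notMem hu₃', hT] at h; omega
    · intro y hy
      rcases mem_insert.1 hy with rfl | hy
      · exact ⟨x₀, by simp [Lg, hS1e, hx₀]⟩
      · obtain ⟨x, hx1, hx2, hx3⟩ := hw y hy
        exact ⟨x, by simp [Lg, hx1, hx2, hx3]⟩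
  case inr =>
    have h := rank_ge (g := Lg gε u₁ u₃ S₁ S₂) (s := insert u₁ (img gε)) ?_
    · rw [card_insert_of_notMem hu₁', hT] at h; omega
    · intro y hy
      rcases mem_insert.1 hy with rfl | hy
      · exact ⟨x₀, by simp [Lg, hx₀]⟩
      · obtain ⟨x, hx1, hx2, hx3⟩ := hw y hy
        exact ⟨x, by simp [Lg, hx1, hx2, hx3]⟩

include hT in
lemma rank_Lg_ge_erase {S₁ S₂ : Finset (Fin n)} {t₀ : Fin n} (ht₀ : t₀ ∈ img gε)
    (hw : ∀ t ∈ img gε, t ≠ t₀ → ∃ x, x ∉ S₁ ∧ x ∉ S₂ ∧ gε x = some t)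
    (h₁ : ∃ x ∈ S₁, x ∉ S₂) (h₂ : S₂.Nonempty) (hd : ∀ x ∈ S₂, x ∉ S₁)
    (hu₁' : u₁ ∉ img gε) (hu₃' : u₃ ∉ img gε) (h13' : u₁ ≠ u₃) :
    r + 1 ≤ ptrank (pt (Lg gε u₁ u₃ S₁ S₂)) := by
  obtain ⟨x₁, hx₁, hx₁'⟩ := h₁
  obtain ⟨x₂, hx₂⟩ := h₂
  have hx₂' : x₂ ∉ S₁ := hd x₂ hx₂
  · have h := rank_ge (g := Lg gε u₁ u₃ S₁ S₂)
        (s := insert u₁ (insert u₃ ((img gε).erase t₀))) ?_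
    · have c1 : u₃ ∉ (img gε).erase t₀ := fun hc => hu₃' (mem_of_mem_erase hc)
      have c2 : u₁ ∉ insert u₃ ((img gε).erase t₀) := by
        simp only [mem_insert]
        rintro (rfl | hc)
        · exact h13' rfl
        · exact hu₁' (mem_of_mem_erase hc)
      rw [card_insert_of_notMem c2, card_insert_of_notMem c1,
        card_erase_of_mem ht₀, hT] at h
      omega
    · intro y hy
      rcases mem_insert.1 hy with rfl | hy
      · exact ⟨x₁, by simp [Lg, hx₁]⟩
      rcases mem_insert.1 hy with rfl | hy
      · exact ⟨x₂, by simp [Lg, hx₂', hx₂]⟩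
      · obtain ⟨x, h1, h2, h3⟩ := hw y (mem_of_mem_erase hy) (ne_of_mem_erase hy)
        exact ⟨x, by simp [Lg, h1, h2, h3]⟩

include hT in
lemma rank_Rg_le {o₁ o₂ o₃ : Option (Fin n)} (c d : Fin n)
    (k₁ : ∀ z, o₁ = some z → z = c ∨ z = d ∨ z ∈ img gε)
    (k₂ : ∀ z, o₂ = some z → z = c ∨ z = d ∨ z ∈ img gε)
    (k₃ : ∀ z, o₃ = some z → z = c ∨ z = d ∨ z ∈ img gε) :
    ptrank (pt (Rg gε u₁ u₂ u₃ o₁ o₂ o₃)) ≤ r + 2 := by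
  have h := rank_le (g := Rg gε u₁ u₂ u₃ o₁ o₂ o₃) (s := insert c (insert d (img gε))) ?_
  · refine h.trans ?_
    have := card_insert_le d (img gε)
    have := card_insert_le c (insert d (img gε))
    omega
  · intro x y hxy
    simp only [Rg] at hxy
    split_ifs at hxy with e1 e2 e3 e4
    · cases hxy; simp [e1]
    · rcases k₁ y hxy with rfl | rfl | hh
      · simp
      · simp
      · simp [hh]
    · rcases k₂ y hxy with rfl | rfl | hh
      · simp
      · simp
      · simp [hh]
    · rcases k₃ y hxy with rfl | rfl | hh
      · simp
      · simp
      · simp [hh]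

include hT hu₁ hu₂ hu₃ h12 h13 h23 in
lemma rank_Rg_ge {o₁ o₂ o₃ : Option (Fin n)} (c : Fin n) (hc : c ∉ img gε)
    (hone : o₁ = some c ∨ o₂ = some c ∨ o₃ = some c) :
    r + 1 ≤ ptrank (pt (Rg gε u₁ u₂ u₃ o₁ o₂ o₃)) := by
  have h := rank_ge (g := Rg gε u₁ u₂ u₃ o₁ o₂ o₃) (s := insert c (img gε)) ?_
  · rw [card_insert_of_notMem hc, hT] at h; omega
  · intro y hy
    rcases mem_insert.1 hy with rfl | hy
    · rcases hone with h1 | h2 | h3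
      · exact ⟨u₁, by rw [Rg_u₁ hu₁, h1]⟩
      · exact ⟨u₂, by rw [Rg_u₂ hu₂ h12, h2]⟩
      · exact ⟨u₃, by rw [Rg_u₃ hu₃ h13 h23, h3]⟩
    · exact ⟨y, Rg_T hy⟩

end Ranks

end Ctx

section Moves

variable {r : ℕ}

def ok (n r : ℕ) (a : PTn n) : Prop := r + 1 ≤ ptrank a ∧ ptrank a ≤ r + 2

def W {n r : ℕ} (a : PTn n) (h : ok n r a) : FreeSemigroup (PTX n (r+2) (r+1)) :=
  FreeSemigroup.of ⟨a, h⟩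

lemma W_eq {a a' : PTn n} (h : ok n r a) (h' : ok n r a') (e : a = a') : W a h = W a' h' := by
  subst e; rfl

lemma moveR {lam mu1 mu2 : PTn n} (hl : ok n r lam) (h1 : ok n r mu1) (h2 : ok n r mu2)
    (hm : ok n r (mu1 * mu2)) (hlm : ok n r (lam * mu1)) :
    ConGen.Rel (PTRel n (r+2) (r+1)) (W lam hl * W (mu1*mu2) hm)
      (W (lam*mu1) hlm * W mu2 h2) := by
  have s1 : ConGen.Rel (PTRel n (r+2) (r+1)) (W mu1 h1 * W mu2 h2) (W (mu1*mu2) hm) :=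
    ConGen.Rel.of _ _ ⟨mu1, mu2, h1, h2, hm, rfl, rfl⟩
  have s2 : ConGen.Rel (PTRel n (r+2) (r+1)) (W lam hl * W mu1 h1) (W (lam*mu1) hlm) :=
    ConGen.Rel.of _ _ ⟨lam, mu1, hl, h1, hlm, rfl, rfl⟩
  refine ConGen.Rel.trans (ConGen.Rel.mul (ConGen.Rel.refl _) (ConGen.Rel.symm s1)) ?_
  rw [← mul_assoc]
  exact ConGen.Rel.mul s2 (ConGen.Rel.refl _)

lemma moveL {lam1 lam2 mu : PTn n} (h1 : ok n r lam1) (h2 : ok n r lam2) (hmu : ok n r mu)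
    (hl : ok n r (lam1 * lam2)) (hlm : ok n r (lam2 * mu)) :
    ConGen.Rel (PTRel n (r+2) (r+1)) (W (lam1*lam2) hl * W mu hmu)
      (W lam1 h1 * W (lam2*mu) hlm) := by
  have s1 : ConGen.Rel (PTRel n (r+2) (r+1)) (W lam1 h1 * W lam2 h2) (W (lam1*lam2) hl) :=
    ConGen.Rel.of _ _ ⟨lam1, lam2, h1, h2, hl, rfl, rfl⟩
  have s2 : ConGen.Rel (PTRel n (r+2) (r+1)) (W lam2 h2 * W mu hmu) (W (lam2*mu) hlm) :=
    ConGen.Rel.of _ _ ⟨lam2, mu, h2, hmu, hlm, rfl, rfl⟩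
  refine ConGen.Rel.trans (ConGen.Rel.mul (ConGen.Rel.symm s1) (ConGen.Rel.refl _)) ?_
  rw [mul_assoc]
  exact ConGen.Rel.mul (ConGen.Rel.refl _) s2

end Moves

section Chains

variable {r : ℕ} {gε : Fin n → Option (Fin n)} {u₁ u₂ u₃ : Fin n}
  (hT : (img gε).card = r)
  (hu₁ : u₁ ∉ img gε) (hu₂ : u₂ ∉ img gε) (hu₃ : u₃ ∉ img gε)
  (h12 : u₁ ≠ u₂) (h13 : u₁ ≠ u₃) (h23 : u₂ ≠ u₃)

include hT hu₁ hu₂ hu₃ h12 h13 h23 in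
lemma keyII (a b : PTn n) (hA : ok n r a) (hB : ok n r b)
    (hab : a * b = pt gε) (hb : ptrank b = r + 1)
    (a₀ : Fin n) (ha₀A : ∃ x, og a x = some a₀) (ha₀b : og b a₀ = none)
    (e₀ : Fin n) (he₀ : gε e₀ = none)
    (hfst : ok n r (pt (Lg gε u₁ u₃ {e₀} ∅)))
    (hsnd : ok n r (pt (Rg gε u₁ u₂ u₃ none (some u₃) none))) :
    ConGen.Rel (PTRel n (r+2) (r+1)) (W a hA * W b hB)
      (W (pt (Lg gε u₁ u₃ {e₀} ∅)) hfst *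
        W (pt (Rg gε u₁ u₂ u₃ none (some u₃) none)) hsnd) := by
  classical
  set ga := og a with hga_def
  set gb := og b with hgb_def
  have ea : pt ga = a := pt_og a
  have eb : pt gb = b := pt_og b
  have hg : (fun x => (ga x).bind gb) = gε := by
    apply pt_injective
    rw [← pt_mul, ea, eb, hab]
  have hgx : ∀ x, gε x = (ga x).bind gb := fun x => (congrFun hg x).symm
  have himgb : (img gb).card = r + 1 := by rw [← rank_pt, eb]; exact hb
  have hTb : img gε ⊆ img gb := by
    intro t ht
    obtain ⟨x, hx⟩ := mem_img.1 ht
    rw [hgx x] at hx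
    obtain ⟨w, hw1, hw2⟩ := Option.bind_eq_some_iff.1 hx
    exact mem_img.2 ⟨w, hw2⟩
  obtain ⟨v₀, hv₀b, hv₀T⟩ : ∃ v, v ∈ img gb ∧ v ∉ img gε := by
    have : ¬ img gb ⊆ img gε := fun hsub => by
      have := card_le_card hsub; omega
    obtain ⟨v, h1, h2⟩ := not_subset.1 this
    exact ⟨v, h1, h2⟩
  have himgb_eq : img gb = insert v₀ (img gε) := by
    refine (eq_of_subset_of_card_le ?_ ?_).symm
    · intro y hy
      rcases mem_insert.1 hy with rfl | hy
      · exact hv₀b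
      · exact hTb hy
    · rw [card_insert_of_notMem hv₀T]; omega
  have hgbT : ∀ w t, gb w = some t → t = v₀ ∨ t ∈ img gε := by
    intro w t hwt
    have : t ∈ img gb := mem_img.2 ⟨w, hwt⟩
    rw [himgb_eq] at this
    exact mem_insert.1 this
  set rc : Fin n → Fin n := fun v => if v = v₀ then u₂ else v with hrc
  set m1 : Fin n → Option (Fin n) :=
    fun z => if z = a₀ then some u₁ else (gb z).map rc with hm1
  set F : Finset (Fin n) := univ.filter (fun x => ga x = some a₀) with hF
  have hFD : ∀ x ∈ F, gε x = none := by
    intro x hx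
    rw [hgx x, (mem_filter.1 hx).2, Option.bind_some, ha₀b]
  -- Step 1 products
  have prod1 : pt m1 * pt (Rg gε u₁ u₂ u₃ none (some v₀) none) = b := by
    rw [pt_mul, ← eb]
    refine congrArg pt (funext fun z => ?_)
    by_cases hz : z = a₀
    · subst hz
      simp [hm1, Rg_u₁ hu₁, ha₀b]
    · cases hgb : gb z with
      | none => simp [hm1, hz, hgb]
      | some v =>
        rcases hgbT _ _ hgb with rfl | hvT
        · simp [hm1, hz, hgb, hrc, Rg_u₂ hu₂ h12]
        · have hne : v ≠ v₀ := fun e => hv₀T (e ▸ hvT)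
          simp [hm1, hz, hgb, hrc, hne, Rg_T hvT]
  have prod2 : a * pt m1 = pt (Lg gε u₁ u₃ F ∅) := by
    conv_lhs => rw [← ea]
    rw [pt_mul]
    refine congrArg pt (funext fun x => ?_)
    cases hga : ga x with
    | none =>
      have hxF : x ∉ F := by simp [hF, hga]
      simp [Lg, hxF, hgx x, hga]
    | some w =>
      by_cases hw : w = a₀
      · subst hw
        have hxF : x ∈ F := by simp [hF, hga]
        simp [Lg, hxF, hm1]
      · have hxF : x ∉ F := by simp [hF, hga, hw]
        simp only [Lg, if_neg hxF, notMem_empty, if_false, Option.bind_some]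
        cases hgb : gb w with
        | none => simp [hm1, hw, hgb, hgx x, hga]
        | some v =>
          have hvT : v ∈ img gε := by
            refine mem_img.2 ⟨x, ?_⟩
            rw [hgx x, hga, Option.bind_some, hgb]
          have hne : v ≠ v₀ := fun e => hv₀T (e ▸ hvT)
          simp [hm1, hw, hgb, hrc, hne, hgx x, hga]
  -- ok facts
  have okR : ∀ o₁ o₂ o₃ (c d : Fin n), c ∉ img gε →
      (o₁ = some c ∨ o₂ = some c ∨ o₃ = some c) →
      (∀ z, o₁ = some z → z = c ∨ z = d ∨ z ∈ img gε) →
      (∀ z, o₂ = some z → z = c ∨ z = d ∨ z ∈ img gε) →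
      (∀ z, o₃ = some z → z = c ∨ z = d ∨ z ∈ img gε) →
      ok n r (pt (Rg gε u₁ u₂ u₃ o₁ o₂ o₃)) :=
    fun o₁ o₂ o₃ c d hc hone k₁ k₂ k₃ =>
      ⟨rank_Rg_ge hu₁ hu₂ hu₃ h12 h13 h23 hT c hc hone, rank_Rg_le hT c d k₁ k₂ k₃⟩
  have knone : ∀ (c d : Fin n) (z : Fin n), (none : Option (Fin n)) = some z →
      z = c ∨ z = d ∨ z ∈ img gε := fun _ _ z hz => by cases hz
  have okm1 : ok n r (pt m1) := by
    constructor
    · have h := rank_ge (g := m1) (s := insert u₁ (img gε)) ?_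
      · rw [card_insert_of_notMem hu₁, hT] at h; omega
      · intro y hy
        rcases mem_insert.1 hy with rfl | hy
        · exact ⟨a₀, by simp [hm1]⟩
        · obtain ⟨w, hw⟩ := mem_img.1 (hTb hy)
          have hwa : w ≠ a₀ := fun e => by rw [e, ha₀b] at hw; cases hw
          have hne : y ≠ v₀ := fun e => hv₀T (e ▸ hy)
          exact ⟨w, by simp [hm1, hwa, hw, hrc, hne]⟩
    · refine le_trans (rank_le (s := insert u₁ (insert u₂ (img gε))) ?_) ?_
      · intro x y hxy
        simp only [hm1] at hxy
        split_ifs at hxy with h1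
        · cases hxy; simp
        · obtain ⟨v, hv1, hv2⟩ := Option.map_eq_some_iff.1 hxy
          rcases hgbT _ _ hv1 with he | hvT
          · rw [he] at hv2
            have hrcv : rc v₀ = u₂ := by simp [hrc]
            rw [hrcv] at hv2; subst hv2; simp
          · have hvne : v ≠ v₀ := fun e => hv₀T (e ▸ hvT)
            have hrcv : rc v = v := by simp [hrc, hvne]
            rw [hrcv] at hv2; subst hv2; simp [hvT]
      · have c1 := card_insert_le u₂ (img gε)
        have c2 := card_insert_le u₁ (insert u₂ (img gε))
        omega
  have okM : ok n r (pt (Lg gε u₁ u₃ F ∅)) := by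
    constructor
    · refine rank_Lg_ge_full hT ?_ (Or.inl ?_) hu₁ hu₃
      · intro t ht
        obtain ⟨x, hx⟩ := mem_img.1 ht
        refine ⟨x, fun hxF => ?_, fun h => (notMem_empty x h), hx⟩
        rw [hFD x hxF] at hx; cases hx
      · obtain ⟨x, hx⟩ := ha₀A
        exact ⟨x, mem_filter.2 ⟨mem_univ _, hx⟩⟩
    · exact rank_Lg_le hT F ∅
  have okRv₀ : ok n r (pt (Rg gε u₁ u₂ u₃ none (some v₀) none)) :=
    okR _ _ _ v₀ v₀ hv₀T (Or.inr (Or.inl rfl)) (knone _ _)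
      (fun z hz => Or.inl (Option.some.inj hz).symm) (knone _ _)
  -- Step 1
  have hmm1 : ok n r (pt m1 * pt (Rg gε u₁ u₂ u₃ none (some v₀) none)) := by
    rw [prod1]; exact hB
  have hlm1 : ok n r (a * pt m1) := by rw [prod2]; exact okM
  have step1 : ConGen.Rel (PTRel n (r+2) (r+1)) (W a hA * W b hB)
      (W (pt (Lg gε u₁ u₃ F ∅)) okM *
        W (pt (Rg gε u₁ u₂ u₃ none (some v₀) none)) okRv₀) := by
    have h := moveR hA okm1 okRv₀ hmm1 hlm1
    rwa [W_eq hmm1 hB prod1, W_eq hlm1 okM prod2] at h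
  -- Step 2
  have okν₁ : ok n r (pt (Rg gε u₁ u₂ u₃ (some u₁) (some u₂) none)) :=
    okR _ _ _ u₁ u₂ hu₁ (Or.inl rfl)
      (fun z hz => Or.inl (Option.some.inj hz).symm)
      (fun z hz => Or.inr (Or.inl (Option.some.inj hz).symm)) (knone _ _)
  have okν₂ : ok n r (pt (Rg gε u₁ u₂ u₃ none (some v₀) (some u₃))) := by
    refine ⟨rank_Rg_ge hu₁ hu₂ hu₃ h12 h13 h23 hT u₃ hu₃ (Or.inr (Or.inr rfl)),
      rank_Rg_le hT v₀ u₃ (fun z hz => by cases hz)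
        (fun z hz => Or.inl (Option.some.inj hz).symm)
        (fun z hz => Or.inr (Or.inl (Option.some.inj hz).symm))⟩
  have prodν₂ : pt (Rg gε u₁ u₂ u₃ (some u₁) (some u₂) none) *
      pt (Rg gε u₁ u₂ u₃ none (some v₀) (some u₃)) =
      pt (Rg gε u₁ u₂ u₃ none (some v₀) none) := by
    rw [RR hu₁ hu₂ hu₃ h12 h13 h23]
    simp only [Option.bind_some, Option.bind_none, Rg_u₁ hu₁, Rg_u₂ hu₂ h12]
  have prodm₂ : pt (Lg gε u₁ u₃ F ∅) *
      pt (Rg gε u₁ u₂ u₃ (some u₁) (some u₂) none) = pt (Lg gε u₁ u₃ F ∅) := by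
    rw [LR hu₁ hu₂ hu₃ h12 h13 h23]
    exact congrArg pt (funext fun x => by simp [Lg])
  have hm₂ : ok n r (pt (Rg gε u₁ u₂ u₃ (some u₁) (some u₂) none) *
      pt (Rg gε u₁ u₂ u₃ none (some v₀) (some u₃))) := by rw [prodν₂]; exact okRv₀
  have hl₂ : ok n r (pt (Lg gε u₁ u₃ F ∅) *
      pt (Rg gε u₁ u₂ u₃ (some u₁) (some u₂) none)) := by rw [prodm₂]; exact okM
  have step2 : ConGen.Rel (PTRel n (r+2) (r+1))
      (W (pt (Lg gε u₁ u₃ F ∅)) okM *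
        W (pt (Rg gε u₁ u₂ u₃ none (some v₀) none)) okRv₀)
      (W (pt (Lg gε u₁ u₃ F ∅)) okM *
        W (pt (Rg gε u₁ u₂ u₃ none (some v₀) (some u₃))) okν₂) := by
    have h := moveR okM okν₁ okν₂ hm₂ hl₂
    rwa [W_eq hm₂ okRv₀ prodν₂, W_eq hl₂ okM prodm₂] at h
  -- Step 3
  have okL3 : ok n r (pt (Rg gε u₁ u₂ u₃ (some u₁) (some u₃) none)) :=
    okR _ _ _ u₁ u₃ hu₁ (Or.inl rfl)
      (fun z hz => Or.inl (Option.some.inj hz).symm)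
      (fun z hz => Or.inr (Or.inl (Option.some.inj hz).symm)) (knone _ _)
  have prodl₃ : pt (Lg gε u₁ u₃ F ∅) *
      pt (Rg gε u₁ u₂ u₃ (some u₁) (some u₃) none) = pt (Lg gε u₁ u₃ F ∅) := by
    rw [LR hu₁ hu₂ hu₃ h12 h13 h23]
    exact congrArg pt (funext fun x => by simp [Lg])
  have prodr₃ : pt (Rg gε u₁ u₂ u₃ (some u₁) (some u₃) none) *
      pt (Rg gε u₁ u₂ u₃ none (some v₀) (some u₃)) =
      pt (Rg gε u₁ u₂ u₃ none (some u₃) none) := by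
    rw [RR hu₁ hu₂ hu₃ h12 h13 h23]
    simp only [Option.bind_some, Option.bind_none, Rg_u₁ hu₁, Rg_u₃ hu₃ h13 h23]
  have hl₃ : ok n r (pt (Lg gε u₁ u₃ F ∅) *
      pt (Rg gε u₁ u₂ u₃ (some u₁) (some u₃) none)) := by rw [prodl₃]; exact okM
  have hr₃ : ok n r (pt (Rg gε u₁ u₂ u₃ (some u₁) (some u₃) none) *
      pt (Rg gε u₁ u₂ u₃ none (some v₀) (some u₃))) := by rw [prodr₃]; exact hsnd
  have step3 : ConGen.Rel (PTRel n (r+2) (r+1))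
      (W (pt (Lg gε u₁ u₃ F ∅)) okM *
        W (pt (Rg gε u₁ u₂ u₃ none (some v₀) (some u₃))) okν₂)
      (W (pt (Lg gε u₁ u₃ F ∅)) okM *
        W (pt (Rg gε u₁ u₂ u₃ none (some u₃) none)) hsnd) := by
    have h := moveL okM okL3 okν₂ hl₃ hr₃
    rwa [W_eq hl₃ okM prodl₃, W_eq hr₃ hsnd prodr₃] at h
  -- Step 4
  have okL4 : ok n r (pt (Lg gε u₁ u₃ (F.erase e₀) {e₀})) := by
    constructor
    · refine rank_Lg_ge_full hT ?_ (Or.inr ⟨e₀, mem_singleton_self e₀⟩) hu₁ hu₃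
      intro t ht
      obtain ⟨x, hx⟩ := mem_img.1 ht
      refine ⟨x, fun hxF => ?_, fun hxe => ?_, hx⟩
      · rw [hFD x (mem_of_mem_erase hxF)] at hx; cases hx
      · rw [mem_singleton.1 hxe, he₀] at hx; cases hx
    · exact rank_Lg_le hT _ _
  have okL4b : ok n r (pt (Rg gε u₁ u₂ u₃ (some u₁) (some u₂)
      (if e₀ ∈ F then some u₁ else none))) := by
    refine okR _ _ _ u₁ u₂ hu₁ (Or.inl rfl)
      (fun z hz => Or.inl (Option.some.inj hz).symm)
      (fun z hz => Or.inr (Or.inl (Option.some.inj hz).symm))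
      (fun z hz => ?_)
    split_ifs at hz with he
    exact Or.inl (Option.some.inj hz).symm
  have prodl₄ : pt (Lg gε u₁ u₃ (F.erase e₀) {e₀}) *
      pt (Rg gε u₁ u₂ u₃ (some u₁) (some u₂) (if e₀ ∈ F then some u₁ else none)) =
      pt (Lg gε u₁ u₃ F ∅) := by
    rw [LR hu₁ hu₂ hu₃ h12 h13 h23]
    refine congrArg pt (funext fun x => ?_)
    by_cases hx1 : x ∈ F.erase e₀
    · simp [Lg, hx1, mem_of_mem_erase hx1]
    · by_cases hx2 : x = e₀
      · by_cases he : e₀ ∈ F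
        · simp [Lg, hx1, hx2, he]
        · simp [Lg, hx1, hx2, he, he₀]
      · have hxF : x ∉ F := fun h => hx1 (mem_erase.2 ⟨hx2, h⟩)
        simp [Lg, hx1, hx2, hxF]
  have prodr₄ : pt (Rg gε u₁ u₂ u₃ (some u₁) (some u₂)
        (if e₀ ∈ F then some u₁ else none)) *
      pt (Rg gε u₁ u₂ u₃ none (some u₃) none) =
      pt (Rg gε u₁ u₂ u₃ none (some u₃) none) := by
    rw [RR hu₁ hu₂ hu₃ h12 h13 h23]
    by_cases he : e₀ ∈ F <;>
      simp only [he, if_true, if_false, Option.bind_some, Option.bind_none,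
        Rg_u₁ hu₁, Rg_u₂ hu₂ h12]
  have hl₄ : ok n r (pt (Lg gε u₁ u₃ (F.erase e₀) {e₀}) *
      pt (Rg gε u₁ u₂ u₃ (some u₁) (some u₂) (if e₀ ∈ F then some u₁ else none))) := by
    rw [prodl₄]; exact okM
  have hr₄ : ok n r (pt (Rg gε u₁ u₂ u₃ (some u₁) (some u₂)
        (if e₀ ∈ F then some u₁ else none)) *
      pt (Rg gε u₁ u₂ u₃ none (some u₃) none)) := by rw [prodr₄]; exact hsnd
  have step4 : ConGen.Rel (PTRel n (r+2) (r+1))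
      (W (pt (Lg gε u₁ u₃ F ∅)) okM *
        W (pt (Rg gε u₁ u₂ u₃ none (some u₃) none)) hsnd)
      (W (pt (Lg gε u₁ u₃ (F.erase e₀) {e₀})) okL4 *
        W (pt (Rg gε u₁ u₂ u₃ none (some u₃) none)) hsnd) := by
    have h := moveL okL4 okL4b hsnd hl₄ hr₄
    rwa [W_eq hl₄ okM prodl₄, W_eq hr₄ hsnd prodr₄] at h
  -- Step 5
  have okν₅ : ok n r (pt (Rg gε u₁ u₂ u₃ none (some u₂) (some u₁))) :=
    okR _ _ _ u₁ u₂ hu₁ (Or.inr (Or.inr rfl)) (knone _ _)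
      (fun z hz => Or.inr (Or.inl (Option.some.inj hz).symm))
      (fun z hz => Or.inl (Option.some.inj hz).symm)
  have prodν₅ : pt (Rg gε u₁ u₂ u₃ none (some u₂) (some u₁)) *
      pt (Rg gε u₁ u₂ u₃ none (some u₃) none) =
      pt (Rg gε u₁ u₂ u₃ none (some u₃) none) := by
    rw [RR hu₁ hu₂ hu₃ h12 h13 h23]
    simp only [Option.bind_some, Option.bind_none, Rg_u₁ hu₁, Rg_u₂ hu₂ h12]
  have prodm₅ : pt (Lg gε u₁ u₃ (F.erase e₀) {e₀}) *
      pt (Rg gε u₁ u₂ u₃ none (some u₂) (some u₁)) = pt (Lg gε u₁ u₃ {e₀} ∅) := by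
    rw [LR hu₁ hu₂ hu₃ h12 h13 h23]
    refine congrArg pt (funext fun x => ?_)
    by_cases hx1 : x ∈ F.erase e₀
    · have : gε x = none := hFD x (mem_of_mem_erase hx1)
      have hxe : x ∉ ({e₀} : Finset (Fin n)) := by
        simp [mem_singleton]; exact (mem_erase.1 hx1).1
      simp [Lg, hx1, hxe, this]
    · simp [Lg, hx1]
  have hm₅ : ok n r (pt (Rg gε u₁ u₂ u₃ none (some u₂) (some u₁)) *
      pt (Rg gε u₁ u₂ u₃ none (some u₃) none)) := by rw [prodν₅]; exact hsnd
  have hl₅ : ok n r (pt (Lg gε u₁ u₃ (F.erase e₀) {e₀}) *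
      pt (Rg gε u₁ u₂ u₃ none (some u₂) (some u₁))) := by rw [prodm₅]; exact hfst
  have step5 : ConGen.Rel (PTRel n (r+2) (r+1))
      (W (pt (Lg gε u₁ u₃ (F.erase e₀) {e₀})) okL4 *
        W (pt (Rg gε u₁ u₂ u₃ none (some u₃) none)) hsnd)
      (W (pt (Lg gε u₁ u₃ {e₀} ∅)) hfst *
        W (pt (Rg gε u₁ u₂ u₃ none (some u₃) none)) hsnd) := by
    have h := moveR okL4 okν₅ hsnd hm₅ hl₅
    rwa [W_eq hm₅ hsnd prodν₅, W_eq hl₅ hfst prodm₅] at h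
  exact step1.trans (step2.trans (step3.trans (step4.trans step5)))


include hT hu₁ hu₂ hu₃ h12 h13 h23 in
lemma keyI (a b : PTn n) (hA : ok n r a) (hB : ok n r b)
    (hab : a * b = pt gε) (hb : ptrank b = r + 1)
    (a₁ a₂ t₀ : Fin n) (ha₁A : ∃ x, og a x = some a₁) (ha₂A : ∃ x, og a x = some a₂)
    (ha12 : a₁ ≠ a₂) (hba₁ : og b a₁ = some t₀) (hba₂ : og b a₂ = some t₀)
    (ts xs xp : Fin n) (hxs : gε xs = some ts) (hxp : gε xp = some ts) (hxsp : xs ≠ xp)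
    (hfst : ok n r (pt (Lg gε u₁ u₃ {xs} ∅)))
    (hsnd : ok n r (pt (Rg gε u₁ u₂ u₃ (some ts) (some u₃) none))) :
    ConGen.Rel (PTRel n (r+2) (r+1)) (W a hA * W b hB)
      (W (pt (Lg gε u₁ u₃ {xs} ∅)) hfst *
        W (pt (Rg gε u₁ u₂ u₃ (some ts) (some u₃) none)) hsnd) := by
  classical
  set ga := og a with hga_def
  set gb := og b with hgb_def
  have ea : pt ga = a := pt_og a
  have eb : pt gb = b := pt_og b
  have hg : (fun x => (ga x).bind gb) = gε := by
    apply pt_injective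
    rw [← pt_mul, ea, eb, hab]
  have hgx : ∀ x, gε x = (ga x).bind gb := fun x => (congrFun hg x).symm
  have himgb : (img gb).card = r + 1 := by rw [← rank_pt, eb]; exact hb
  have hTb : img gε ⊆ img gb := by
    intro t ht
    obtain ⟨x, hx⟩ := mem_img.1 ht
    rw [hgx x] at hx
    obtain ⟨w, hw1, hw2⟩ := Option.bind_eq_some_iff.1 hx
    exact mem_img.2 ⟨w, hw2⟩
  obtain ⟨v₀, hv₀b, hv₀T⟩ : ∃ v, v ∈ img gb ∧ v ∉ img gε := by
    have : ¬ img gb ⊆ img gε := fun hsub => by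
      have := card_le_card hsub; omega
    obtain ⟨v, h1, h2⟩ := not_subset.1 this
    exact ⟨v, h1, h2⟩
  have himgb_eq : img gb = insert v₀ (img gε) := by
    refine (eq_of_subset_of_card_le ?_ ?_).symm
    · intro y hy
      rcases mem_insert.1 hy with rfl | hy
      · exact hv₀b
      · exact hTb hy
    · rw [card_insert_of_notMem hv₀T]; omega
  have hgbT : ∀ w t, gb w = some t → t = v₀ ∨ t ∈ img gε := by
    intro w t hwt
    have : t ∈ img gb := mem_img.2 ⟨w, hwt⟩
    rw [himgb_eq] at this
    exact mem_insert.1 this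
  obtain ⟨x₁, hx₁⟩ := ha₁A
  obtain ⟨x₂, hx₂⟩ := ha₂A
  have ht₀T : t₀ ∈ img gε := mem_img.2 ⟨x₁, by rw [hgx x₁, hx₁, Option.bind_some, hba₁]⟩
  have htsT : ts ∈ img gε := mem_img.2 ⟨xs, hxs⟩
  have ht₀v₀ : t₀ ≠ v₀ := fun e => hv₀T (e ▸ ht₀T)
  set rc : Fin n → Fin n := fun v => if v = v₀ then u₂ else v with hrc
  set m1 : Fin n → Option (Fin n) :=
    fun z => if z = a₁ then some u₁ else (gb z).map rc with hm1
  set X₁ : Finset (Fin n) := univ.filter (fun x => ga x = some a₁) with hX₁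
  have hX₁ε : ∀ x ∈ X₁, gε x = some t₀ := by
    intro x hx
    rw [hgx x, (mem_filter.1 hx).2, Option.bind_some, hba₁]
  have hx₂X : x₂ ∉ X₁ := by
    intro hc
    rw [(mem_filter.1 hc).2] at hx₂
    exact ha12 (Option.some.inj hx₂)
  have hgεx₂ : gε x₂ = some t₀ := by rw [hgx x₂, hx₂, Option.bind_some, hba₂]
  have hx₁X : x₁ ∈ X₁ := by simp [hX₁, hx₁]
  -- step 1 products
  have prod1 : pt m1 * pt (Rg gε u₁ u₂ u₃ (some t₀) (some v₀) none) = b := by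
    rw [pt_mul, ← eb]
    refine congrArg pt (funext fun z => ?_)
    by_cases hz : z = a₁
    · subst hz
      simp [hm1, Rg_u₁ hu₁, hba₁]
    · cases hgb : gb z with
      | none => simp [hm1, hz, hgb]
      | some v =>
        rcases hgbT _ _ hgb with he | hvT
        · rw [he]
          simp [hm1, hz, hgb, hrc, he, Rg_u₂ hu₂ h12]
        · have hne : v ≠ v₀ := fun e => hv₀T (e ▸ hvT)
          simp [hm1, hz, hgb, hrc, hne, Rg_T hvT]
  have prod2 : a * pt m1 = pt (Lg gε u₁ u₃ X₁ ∅) := by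
    conv_lhs => rw [← ea]
    rw [pt_mul]
    refine congrArg pt (funext fun x => ?_)
    cases hga : ga x with
    | none =>
      have hxF : x ∉ X₁ := by simp [hX₁, hga]
      simp [Lg, hxF, hgx x, hga]
    | some w =>
      by_cases hw : w = a₁
      · subst hw
        have hxF : x ∈ X₁ := by simp [hX₁, hga]
        simp [Lg, hxF, hm1]
      · have hxF : x ∉ X₁ := by simp [hX₁, hga, hw]
        simp only [Lg, if_neg hxF, notMem_empty, if_false, Option.bind_some]
        cases hgb : gb w with
        | none => simp [hm1, hw, hgb, hgx x, hga]
        | some v =>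
          have hvT : v ∈ img gε := by
            refine mem_img.2 ⟨x, ?_⟩
            rw [hgx x, hga, Option.bind_some, hgb]
          have hne : v ≠ v₀ := fun e => hv₀T (e ▸ hvT)
          simp [hm1, hw, hgb, hrc, hne, hgx x, hga]
  -- ok facts
  have okR : ∀ o₁ o₂ o₃ (c d : Fin n), c ∉ img gε →
      (o₁ = some c ∨ o₂ = some c ∨ o₃ = some c) →
      (∀ z, o₁ = some z → z = c ∨ z = d ∨ z ∈ img gε) →
      (∀ z, o₂ = some z → z = c ∨ z = d ∨ z ∈ img gε) →
      (∀ z, o₃ = some z → z = c ∨ z = d ∨ z ∈ img gε) →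
      ok n r (pt (Rg gε u₁ u₂ u₃ o₁ o₂ o₃)) :=
    fun o₁ o₂ o₃ c d hc hone k₁ k₂ k₃ =>
      ⟨rank_Rg_ge hu₁ hu₂ hu₃ h12 h13 h23 hT c hc hone, rank_Rg_le hT c d k₁ k₂ k₃⟩
  have knone : ∀ (c d : Fin n) (z : Fin n), (none : Option (Fin n)) = some z →
      z = c ∨ z = d ∨ z ∈ img gε := fun _ _ z hz => by cases hz
  have ksome : ∀ (c : Fin n) (d : Fin n) (z : Fin n),
      (some c : Option (Fin n)) = some z → z = c ∨ z = d ∨ z ∈ img gε :=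
    fun c d z hz => Or.inl (Option.some.inj hz).symm
  have kT : ∀ (t : Fin n), t ∈ img gε → ∀ (c d : Fin n) (z : Fin n),
      (some t : Option (Fin n)) = some z → z = c ∨ z = d ∨ z ∈ img gε :=
    fun t ht c d z hz => Or.inr (Or.inr ((Option.some.inj hz) ▸ ht))
  have okm1 : ok n r (pt m1) := by
    constructor
    · have h := rank_ge (g := m1) (s := insert u₁ (img gε)) ?_
      · rw [card_insert_of_notMem hu₁, hT] at h; omega
      · intro y hy
        rcases mem_insert.1 hy with rfl | hy
        · exact ⟨a₁, by simp [hm1]⟩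
        · obtain ⟨w, hw⟩ := mem_img.1 (hTb hy)
          have hne : y ≠ v₀ := fun e => hv₀T (e ▸ hy)
          by_cases hwa : w = a₁
          · rw [hwa, hba₁] at hw
            have hyt : y = t₀ := (Option.some.inj hw).symm
            subst hyt
            refine ⟨a₂, ?_⟩
            rw [hm1]
            simp only [if_neg (Ne.symm ha12), hba₂, Option.map_some]
            simp [hrc, ht₀v₀]
          · exact ⟨w, by simp [hm1, hwa, hw, hrc, hne]⟩
    · refine le_trans (rank_le (s := insert u₁ (insert u₂ (img gε))) ?_) ?_
      · intro x y hxy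
        simp only [hm1] at hxy
        split_ifs at hxy with h1
        · cases hxy; simp
        · obtain ⟨v, hv1, hv2⟩ := Option.map_eq_some_iff.1 hxy
          rcases hgbT _ _ hv1 with he | hvT
          · rw [he] at hv2
            have hrcv : rc v₀ = u₂ := by simp [hrc]
            rw [hrcv] at hv2; subst hv2; simp
          · have hvne : v ≠ v₀ := fun e => hv₀T (e ▸ hvT)
            have hrcv : rc v = v := by simp [hrc, hvne]
            rw [hrcv] at hv2; subst hv2; simp [hvT]
      · have c1 := card_insert_le u₂ (img gε)
        have c2 := card_insert_le u₁ (insert u₂ (img gε))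
        omega
  have okM : ok n r (pt (Lg gε u₁ u₃ X₁ ∅)) := by
    constructor
    · refine rank_Lg_ge_full hT ?_ (Or.inl ⟨x₁, hx₁X⟩) hu₁ hu₃
      intro t ht
      by_cases htt : t = t₀
      · exact ⟨x₂, hx₂X, fun h => (notMem_empty x₂ h), htt ▸ hgεx₂⟩
      · obtain ⟨x, hx⟩ := mem_img.1 ht
        refine ⟨x, fun hxF => ?_, fun h => (notMem_empty x h), hx⟩
        rw [hX₁ε x hxF] at hx
        exact htt (Option.some.inj hx).symm
    · exact rank_Lg_le hT X₁ ∅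
  have okRv₀ : ok n r (pt (Rg gε u₁ u₂ u₃ (some t₀) (some v₀) none)) :=
    okR _ _ _ v₀ v₀ hv₀T (Or.inr (Or.inl rfl)) (kT t₀ ht₀T _ _)
      (ksome _ _) (knone _ _)
  -- Step 1
  have hmm1 : ok n r (pt m1 * pt (Rg gε u₁ u₂ u₃ (some t₀) (some v₀) none)) := by
    rw [prod1]; exact hB
  have hlm1 : ok n r (a * pt m1) := by rw [prod2]; exact okM
  have step1 : ConGen.Rel (PTRel n (r+2) (r+1)) (W a hA * W b hB)
      (W (pt (Lg gε u₁ u₃ X₁ ∅)) okM *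
        W (pt (Rg gε u₁ u₂ u₃ (some t₀) (some v₀) none)) okRv₀) := by
    have h := moveR hA okm1 okRv₀ hmm1 hlm1
    rwa [W_eq hmm1 hB prod1, W_eq hlm1 okM prod2] at h
  -- Step 2
  have okν₁ : ok n r (pt (Rg gε u₁ u₂ u₃ (some u₁) (some u₂) none)) :=
    okR _ _ _ u₁ u₂ hu₁ (Or.inl rfl) (ksome _ _)
      (fun z hz => Or.inr (Or.inl (Option.some.inj hz).symm)) (knone _ _)
  have okν₂ : ok n r (pt (Rg gε u₁ u₂ u₃ (some t₀) (some v₀) (some u₃))) := by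
    refine ⟨rank_Rg_ge hu₁ hu₂ hu₃ h12 h13 h23 hT u₃ hu₃ (Or.inr (Or.inr rfl)),
      rank_Rg_le hT v₀ u₃ (kT t₀ ht₀T _ _) (ksome _ _)
        (fun z hz => Or.inr (Or.inl (Option.some.inj hz).symm))⟩
  have prodν₂ : pt (Rg gε u₁ u₂ u₃ (some u₁) (some u₂) none) *
      pt (Rg gε u₁ u₂ u₃ (some t₀) (some v₀) (some u₃)) =
      pt (Rg gε u₁ u₂ u₃ (some t₀) (some v₀) none) := by
    rw [RR hu₁ hu₂ hu₃ h12 h13 h23]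
    simp only [Option.bind_some, Option.bind_none, Rg_u₁ hu₁, Rg_u₂ hu₂ h12]
  have prodm₂ : pt (Lg gε u₁ u₃ X₁ ∅) *
      pt (Rg gε u₁ u₂ u₃ (some u₁) (some u₂) none) = pt (Lg gε u₁ u₃ X₁ ∅) := by
    rw [LR hu₁ hu₂ hu₃ h12 h13 h23]
    exact congrArg pt (funext fun x => by simp [Lg])
  have hm₂ : ok n r (pt (Rg gε u₁ u₂ u₃ (some u₁) (some u₂) none) *
      pt (Rg gε u₁ u₂ u₃ (some t₀) (some v₀) (some u₃))) := by
    rw [prodν₂]; exact okRv₀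
  have hl₂ : ok n r (pt (Lg gε u₁ u₃ X₁ ∅) *
      pt (Rg gε u₁ u₂ u₃ (some u₁) (some u₂) none)) := by rw [prodm₂]; exact okM
  have step2 : ConGen.Rel (PTRel n (r+2) (r+1))
      (W (pt (Lg gε u₁ u₃ X₁ ∅)) okM *
        W (pt (Rg gε u₁ u₂ u₃ (some t₀) (some v₀) none)) okRv₀)
      (W (pt (Lg gε u₁ u₃ X₁ ∅)) okM *
        W (pt (Rg gε u₁ u₂ u₃ (some t₀) (some v₀) (some u₃))) okν₂) := by
    have h := moveR okM okν₁ okν₂ hm₂ hl₂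
    rwa [W_eq hm₂ okRv₀ prodν₂, W_eq hl₂ okM prodm₂] at h
  -- Step 3
  have okL3 : ok n r (pt (Rg gε u₁ u₂ u₃ (some u₁) (some u₃) none)) :=
    okR _ _ _ u₁ u₃ hu₁ (Or.inl rfl) (ksome _ _)
      (fun z hz => Or.inr (Or.inl (Option.some.inj hz).symm)) (knone _ _)
  have okμs : ok n r (pt (Rg gε u₁ u₂ u₃ (some t₀) (some u₃) none)) :=
    okR _ _ _ u₃ u₃ hu₃ (Or.inr (Or.inl rfl)) (kT t₀ ht₀T _ _)
      (ksome _ _) (knone _ _)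
  have prodl₃ : pt (Lg gε u₁ u₃ X₁ ∅) *
      pt (Rg gε u₁ u₂ u₃ (some u₁) (some u₃) none) = pt (Lg gε u₁ u₃ X₁ ∅) := by
    rw [LR hu₁ hu₂ hu₃ h12 h13 h23]
    exact congrArg pt (funext fun x => by simp [Lg])
  have prodr₃ : pt (Rg gε u₁ u₂ u₃ (some u₁) (some u₃) none) *
      pt (Rg gε u₁ u₂ u₃ (some t₀) (some v₀) (some u₃)) =
      pt (Rg gε u₁ u₂ u₃ (some t₀) (some u₃) none) := by
    rw [RR hu₁ hu₂ hu₃ h12 h13 h23]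
    simp only [Option.bind_some, Option.bind_none, Rg_u₁ hu₁, Rg_u₃ hu₃ h13 h23]
  have hl₃ : ok n r (pt (Lg gε u₁ u₃ X₁ ∅) *
      pt (Rg gε u₁ u₂ u₃ (some u₁) (some u₃) none)) := by rw [prodl₃]; exact okM
  have hr₃ : ok n r (pt (Rg gε u₁ u₂ u₃ (some u₁) (some u₃) none) *
      pt (Rg gε u₁ u₂ u₃ (some t₀) (some v₀) (some u₃))) := by rw [prodr₃]; exact okμs
  have step3 : ConGen.Rel (PTRel n (r+2) (r+1))
      (W (pt (Lg gε u₁ u₃ X₁ ∅)) okM *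
        W (pt (Rg gε u₁ u₂ u₃ (some t₀) (some v₀) (some u₃))) okν₂)
      (W (pt (Lg gε u₁ u₃ X₁ ∅)) okM *
        W (pt (Rg gε u₁ u₂ u₃ (some t₀) (some u₃) none)) okμs) := by
    have h := moveL okM okL3 okν₂ hl₃ hr₃
    rwa [W_eq hl₃ okM prodl₃, W_eq hr₃ okμs prodr₃] at h
  -- Step 4
  have hxsX : xs ∈ X₁ → ts = t₀ := by
    intro h
    have := hX₁ε xs h
    rw [hxs] at this
    exact Option.some.inj this
  have okL4 : ok n r (pt (Lg gε u₁ u₃ (X₁.erase xs) {xs})) := by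
    constructor
    · by_cases hxX : xs ∈ X₁
      · -- case A : ts = t₀
        have hts : ts = t₀ := hxsX hxX
        refine rank_Lg_ge_full hT ?_ (Or.inr ⟨xs, mem_singleton_self xs⟩) hu₁ hu₃
        intro t ht
        by_cases htt : t = t₀
        · refine ⟨x₂, fun hc => hx₂X (mem_of_mem_erase hc), ?_, htt ▸ hgεx₂⟩
          simp only [mem_singleton]
          exact fun hc => hx₂X (hc ▸ hxX)
        · obtain ⟨x, hx⟩ := mem_img.1 ht
          refine ⟨x, fun hc => ?_, ?_, hx⟩
          · rw [hX₁ε x (mem_of_mem_erase hc)] at hx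
            exact htt (Option.some.inj hx).symm
          · simp only [mem_singleton]
            intro hc
            rw [hc, hxs] at hx
            exact htt ((Option.some.inj hx).symm.trans hts)
      · by_cases htt0 : ts = t₀
        · -- case C : both nonempty, use erase lemma
          refine rank_Lg_ge_erase hT ht₀T ?_ ⟨x₁, mem_erase.2 ⟨fun hc => hxX (hc ▸ hx₁X), hx₁X⟩,
              by simp only [mem_singleton]; exact fun hc => hxX (hc ▸ hx₁X)⟩
              ⟨xs, mem_singleton_self xs⟩ ?_ hu₁ hu₃ h13
          · intro t ht htt
            obtain ⟨x, hx⟩ := mem_img.1 ht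
            refine ⟨x, fun hc => ?_, ?_, hx⟩
            · rw [hX₁ε x (mem_of_mem_erase hc)] at hx
              exact htt (Option.some.inj hx).symm
            · simp only [mem_singleton]
              intro hc
              rw [hc, hxs] at hx
              exact htt ((Option.some.inj hx).symm.trans htt0)
          · intro x hx
            rw [mem_singleton.1 hx]
            exact fun hc => hxX (mem_of_mem_erase hc)
        · -- case B : full
          refine rank_Lg_ge_full hT ?_ (Or.inr ⟨xs, mem_singleton_self xs⟩) hu₁ hu₃
          intro t ht
          by_cases htt : t = t₀
          · refine ⟨x₂, fun hc => hx₂X (mem_of_mem_erase hc), ?_, htt ▸ hgεx₂⟩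
            simp only [mem_singleton]
            intro hc
            rw [hc, hxs] at hgεx₂
            exact htt0 (Option.some.inj hgεx₂)
          · by_cases htts : t = ts
            · refine ⟨xp, fun hc => ?_, ?_, htts ▸ hxp⟩
              · rw [hX₁ε xp (mem_of_mem_erase hc)] at hxp
                exact htt0 (Option.some.inj hxp).symm
              · simp only [mem_singleton]
                exact fun hc => hxsp (hc.symm)
            · obtain ⟨x, hx⟩ := mem_img.1 ht
              refine ⟨x, fun hc => ?_, ?_, hx⟩
              · rw [hX₁ε x (mem_of_mem_erase hc)] at hx
                exact htt (Option.some.inj hx).symm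
              · simp only [mem_singleton]
                intro hc
                rw [hc, hxs] at hx
                exact htts (Option.some.inj hx).symm
    · exact rank_Lg_le hT _ _
  have okL4b : ok n r (pt (Rg gε u₁ u₂ u₃ (some u₁) (some u₂)
      (some (if xs ∈ X₁ then u₁ else ts)))) := by
    refine okR _ _ _ u₁ u₂ hu₁ (Or.inl rfl) (ksome _ _)
      (fun z hz => Or.inr (Or.inl (Option.some.inj hz).symm)) (fun z hz => ?_)
    by_cases hxX : xs ∈ X₁
    · rw [if_pos hxX] at hz
      exact Or.inl (Option.some.inj hz).symm
    · rw [if_neg hxX] at hz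
      exact Or.inr (Or.inr ((Option.some.inj hz) ▸ htsT))
  have prodl₄ : pt (Lg gε u₁ u₃ (X₁.erase xs) {xs}) *
      pt (Rg gε u₁ u₂ u₃ (some u₁) (some u₂) (some (if xs ∈ X₁ then u₁ else ts))) =
      pt (Lg gε u₁ u₃ X₁ ∅) := by
    rw [LR hu₁ hu₂ hu₃ h12 h13 h23]
    refine congrArg pt (funext fun x => ?_)
    by_cases hx1 : x ∈ X₁.erase xs
    · simp [Lg, hx1, mem_of_mem_erase hx1]
    · by_cases hx2 : x = xs
      · by_cases hxX : xs ∈ X₁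
        · simp [Lg, hx1, hx2, hxX]
        · simp [Lg, hx1, hx2, hxX, hxs]
      · have hxF : x ∉ X₁ := fun h => hx1 (mem_erase.2 ⟨hx2, h⟩)
        simp [Lg, hx1, hx2, hxF]
  have prodr₄ : pt (Rg gε u₁ u₂ u₃ (some u₁) (some u₂)
        (some (if xs ∈ X₁ then u₁ else ts))) *
      pt (Rg gε u₁ u₂ u₃ (some t₀) (some u₃) none) =
      pt (Rg gε u₁ u₂ u₃ (some t₀) (some u₃) (some (if xs ∈ X₁ then t₀ else ts))) := by
    rw [RR hu₁ hu₂ hu₃ h12 h13 h23]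
    by_cases hxX : xs ∈ X₁ <;>
      simp only [hxX, if_true, if_false, Option.bind_some, Option.bind_none,
        Rg_u₁ hu₁, Rg_u₂ hu₂ h12, Rg_T htsT]
  have okν₂' : ok n r (pt (Rg gε u₁ u₂ u₃ (some t₀) (some u₃)
      (some (if xs ∈ X₁ then t₀ else ts)))) := by
    refine okR _ _ _ u₃ u₃ hu₃ (Or.inr (Or.inl rfl)) (kT t₀ ht₀T _ _)
      (ksome _ _) (fun z hz => ?_)
    by_cases hxX : xs ∈ X₁
    · rw [if_pos hxX] at hz
      exact Or.inr (Or.inr ((Option.some.inj hz) ▸ ht₀T))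
    · rw [if_neg hxX] at hz
      exact Or.inr (Or.inr ((Option.some.inj hz) ▸ htsT))
  have hl₄ : ok n r (pt (Lg gε u₁ u₃ (X₁.erase xs) {xs}) *
      pt (Rg gε u₁ u₂ u₃ (some u₁) (some u₂) (some (if xs ∈ X₁ then u₁ else ts)))) := by
    rw [prodl₄]; exact okM
  have hr₄ : ok n r (pt (Rg gε u₁ u₂ u₃ (some u₁) (some u₂)
        (some (if xs ∈ X₁ then u₁ else ts))) *
      pt (Rg gε u₁ u₂ u₃ (some t₀) (some u₃) none)) := by rw [prodr₄]; exact okν₂'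
  have step4 : ConGen.Rel (PTRel n (r+2) (r+1))
      (W (pt (Lg gε u₁ u₃ X₁ ∅)) okM *
        W (pt (Rg gε u₁ u₂ u₃ (some t₀) (some u₃) none)) okμs)
      (W (pt (Lg gε u₁ u₃ (X₁.erase xs) {xs})) okL4 *
        W (pt (Rg gε u₁ u₂ u₃ (some t₀) (some u₃)
          (some (if xs ∈ X₁ then t₀ else ts)))) okν₂') := by
    have h := moveL okL4 okL4b okμs hl₄ hr₄
    rwa [W_eq hl₄ okM prodl₄, W_eq hr₄ okν₂' prodr₄] at h
  -- Step 5
  have okν₅ : ok n r (pt (Rg gε u₁ u₂ u₃ (some t₀) (some u₂) (some u₁))) :=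
    okR _ _ _ u₁ u₂ hu₁ (Or.inr (Or.inr rfl)) (kT t₀ ht₀T _ _)
      (fun z hz => Or.inr (Or.inl (Option.some.inj hz).symm)) (ksome _ _)
  have prodν₅ : pt (Rg gε u₁ u₂ u₃ (some t₀) (some u₂) (some u₁)) *
      pt (Rg gε u₁ u₂ u₃ (some ts) (some u₃) none) =
      pt (Rg gε u₁ u₂ u₃ (some t₀) (some u₃) (some (if xs ∈ X₁ then t₀ else ts))) := by
    rw [RR hu₁ hu₂ hu₃ h12 h13 h23]
    simp only [Option.bind_some, Rg_u₁ hu₁, Rg_u₂ hu₂ h12, Rg_T ht₀T]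
    by_cases hxX : xs ∈ X₁
    · rw [if_pos hxX, ← hxsX hxX]
    · rw [if_neg hxX]
  have prodm₅ : pt (Lg gε u₁ u₃ (X₁.erase xs) {xs}) *
      pt (Rg gε u₁ u₂ u₃ (some t₀) (some u₂) (some u₁)) =
      pt (Lg gε u₁ u₃ {xs} ∅) := by
    rw [LR hu₁ hu₂ hu₃ h12 h13 h23]
    refine congrArg pt (funext fun x => ?_)
    by_cases hx1 : x ∈ X₁.erase xs
    · have hxe : x ∉ ({xs} : Finset (Fin n)) := by
        simp only [mem_singleton]
        exact (mem_erase.1 hx1).1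
      simp [Lg, hx1, hxe, hX₁ε x (mem_of_mem_erase hx1)]
    · simp [Lg, hx1]
  have hm₅ : ok n r (pt (Rg gε u₁ u₂ u₃ (some t₀) (some u₂) (some u₁)) *
      pt (Rg gε u₁ u₂ u₃ (some ts) (some u₃) none)) := by rw [prodν₅]; exact okν₂'
  have hl₅ : ok n r (pt (Lg gε u₁ u₃ (X₁.erase xs) {xs}) *
      pt (Rg gε u₁ u₂ u₃ (some t₀) (some u₂) (some u₁))) := by rw [prodm₅]; exact hfst
  have step5 : ConGen.Rel (PTRel n (r+2) (r+1))
      (W (pt (Lg gε u₁ u₃ (X₁.erase xs) {xs})) okL4 *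
        W (pt (Rg gε u₁ u₂ u₃ (some t₀) (some u₃)
          (some (if xs ∈ X₁ then t₀ else ts)))) okν₂')
      (W (pt (Lg gε u₁ u₃ {xs} ∅)) hfst *
        W (pt (Rg gε u₁ u₂ u₃ (some ts) (some u₃) none)) hsnd) := by
    have h := moveR okL4 okν₅ hsnd hm₅ hl₅
    rwa [W_eq hm₅ okν₂' prodν₅, W_eq hl₅ hfst prodm₅] at h
  exact step1.trans (step2.trans (step3.trans (step4.trans step5)))

include hT hu₁ hu₂ hu₃ h12 h13 h23 in
lemma bridge (e₀ : Fin n) (he₀ : gε e₀ = none)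
    (ts xs xp : Fin n) (hxs : gε xs = some ts) (hxp : gε xp = some ts) (hxsp : xs ≠ xp)
    (hfstJ : ok n r (pt (Lg gε u₁ u₃ {e₀} ∅)))
    (hsndJ : ok n r (pt (Rg gε u₁ u₂ u₃ none (some u₃) none)))
    (hfstS : ok n r (pt (Lg gε u₁ u₃ {xs} ∅)))
    (hsndS : ok n r (pt (Rg gε u₁ u₂ u₃ (some ts) (some u₃) none))) :
    ConGen.Rel (PTRel n (r+2) (r+1))
      (W (pt (Lg gε u₁ u₃ {e₀} ∅)) hfstJ *
        W (pt (Rg gε u₁ u₂ u₃ none (some u₃) none)) hsndJ)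
      (W (pt (Lg gε u₁ u₃ {xs} ∅)) hfstS *
        W (pt (Rg gε u₁ u₂ u₃ (some ts) (some u₃) none)) hsndS) := by
  classical
  have htsT : ts ∈ img gε := mem_img.2 ⟨xs, hxs⟩
  have hexs : e₀ ≠ xs := fun hc => by rw [hc, hxs] at he₀; cases he₀
  have okR : ∀ o₁ o₂ o₃ (c d : Fin n), c ∉ img gε →
      (o₁ = some c ∨ o₂ = some c ∨ o₃ = some c) →
      (∀ z, o₁ = some z → z = c ∨ z = d ∨ z ∈ img gε) →
      (∀ z, o₂ = some z → z = c ∨ z = d ∨ z ∈ img gε) →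
      (∀ z, o₃ = some z → z = c ∨ z = d ∨ z ∈ img gε) →
      ok n r (pt (Rg gε u₁ u₂ u₃ o₁ o₂ o₃)) :=
    fun o₁ o₂ o₃ c d hc hone k₁ k₂ k₃ =>
      ⟨rank_Rg_ge hu₁ hu₂ hu₃ h12 h13 h23 hT c hc hone, rank_Rg_le hT c d k₁ k₂ k₃⟩
  have knone : ∀ (c d : Fin n) (z : Fin n), (none : Option (Fin n)) = some z →
      z = c ∨ z = d ∨ z ∈ img gε := fun _ _ z hz => by cases hz
  have ksome : ∀ (c : Fin n) (d : Fin n) (z : Fin n),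
      (some c : Option (Fin n)) = some z → z = c ∨ z = d ∨ z ∈ img gε :=
    fun c d z hz => Or.inl (Option.some.inj hz).symm
  have kT : ∀ (t : Fin n), t ∈ img gε → ∀ (c d : Fin n) (z : Fin n),
      (some t : Option (Fin n)) = some z → z = c ∨ z = d ∨ z ∈ img gε :=
    fun t ht c d z hz => Or.inr (Or.inr ((Option.some.inj hz) ▸ ht))
  have okLam1 : ok n r (pt (Lg gε u₁ u₃ {e₀} {xs})) := by
    constructor
    · refine rank_Lg_ge_full hT ?_ (Or.inl ⟨e₀, mem_singleton_self e₀⟩) hu₁ hu₃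
      intro t ht
      by_cases htts : t = ts
      · refine ⟨xp, ?_, ?_, htts ▸ hxp⟩
        · simp only [mem_singleton]
          intro hc
          rw [← hc, hxp] at he₀; cases he₀
        · simp only [mem_singleton]
          exact fun hc => hxsp hc.symm
      · obtain ⟨x, hx⟩ := mem_img.1 ht
        refine ⟨x, ?_, ?_, hx⟩
        · simp only [mem_singleton]
          intro hc
          rw [hc, he₀] at hx; cases hx
        · simp only [mem_singleton]
          intro hc
          rw [hc, hxs] at hx
          exact htts (Option.some.inj hx).symm
    · exact rank_Lg_le hT _ _
  have okLam2 : ok n r (pt (Rg gε u₁ u₂ u₃ (some u₁) (some u₂) (some ts))) :=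
    okR _ _ _ u₁ u₂ hu₁ (Or.inl rfl) (ksome _ _)
      (fun z hz => Or.inr (Or.inl (Option.some.inj hz).symm)) (kT ts htsT _ _)
  have okRm : ok n r (pt (Rg gε u₁ u₂ u₃ none (some u₃) (some ts))) :=
    okR _ _ _ u₃ u₃ hu₃ (Or.inr (Or.inl rfl)) (knone _ _) (ksome _ _) (kT ts htsT _ _)
  have prodl : pt (Lg gε u₁ u₃ {e₀} {xs}) *
      pt (Rg gε u₁ u₂ u₃ (some u₁) (some u₂) (some ts)) = pt (Lg gε u₁ u₃ {e₀} ∅) := by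
    rw [LR hu₁ hu₂ hu₃ h12 h13 h23]
    refine congrArg pt (funext fun x => ?_)
    by_cases hx1 : x = e₀
    · simp [Lg, hx1]
    · by_cases hx2 : x = xs
      · simp [Lg, hx1, hx2, hxs]
      · simp [Lg, hx1, hx2]
  have prodr : pt (Rg gε u₁ u₂ u₃ (some u₁) (some u₂) (some ts)) *
      pt (Rg gε u₁ u₂ u₃ none (some u₃) none) =
      pt (Rg gε u₁ u₂ u₃ none (some u₃) (some ts)) := by
    rw [RR hu₁ hu₂ hu₃ h12 h13 h23]
    simp only [Option.bind_some, Rg_u₁ hu₁, Rg_u₂ hu₂ h12, Rg_T htsT]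
  have hl₁ : ok n r (pt (Lg gε u₁ u₃ {e₀} {xs}) *
      pt (Rg gε u₁ u₂ u₃ (some u₁) (some u₂) (some ts))) := by rw [prodl]; exact hfstJ
  have hr₁ : ok n r (pt (Rg gε u₁ u₂ u₃ (some u₁) (some u₂) (some ts)) *
      pt (Rg gε u₁ u₂ u₃ none (some u₃) none)) := by rw [prodr]; exact okRm
  have stepB1 : ConGen.Rel (PTRel n (r+2) (r+1))
      (W (pt (Lg gε u₁ u₃ {e₀} ∅)) hfstJ *
        W (pt (Rg gε u₁ u₂ u₃ none (some u₃) none)) hsndJ)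
      (W (pt (Lg gε u₁ u₃ {e₀} {xs})) okLam1 *
        W (pt (Rg gε u₁ u₂ u₃ none (some u₃) (some ts))) okRm) := by
    have h := moveL okLam1 okLam2 hsndJ hl₁ hr₁
    rwa [W_eq hl₁ hfstJ prodl, W_eq hr₁ okRm prodr] at h
  have okν : ok n r (pt (Rg gε u₁ u₂ u₃ none (some u₂) (some u₁))) :=
    okR _ _ _ u₁ u₂ hu₁ (Or.inr (Or.inr rfl)) (knone _ _)
      (fun z hz => Or.inr (Or.inl (Option.some.inj hz).symm)) (ksome _ _)
  have prodν : pt (Rg gε u₁ u₂ u₃ none (some u₂) (some u₁)) *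
      pt (Rg gε u₁ u₂ u₃ (some ts) (some u₃) none) =
      pt (Rg gε u₁ u₂ u₃ none (some u₃) (some ts)) := by
    rw [RR hu₁ hu₂ hu₃ h12 h13 h23]
    simp only [Option.bind_some, Option.bind_none, Rg_u₁ hu₁, Rg_u₂ hu₂ h12]
  have prodm : pt (Lg gε u₁ u₃ {e₀} {xs}) *
      pt (Rg gε u₁ u₂ u₃ none (some u₂) (some u₁)) = pt (Lg gε u₁ u₃ {xs} ∅) := by
    rw [LR hu₁ hu₂ hu₃ h12 h13 h23]
    refine congrArg pt (funext fun x => ?_)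
    by_cases hx1 : x = e₀
    · simp [Lg, hx1, hexs, he₀]
    · by_cases hx2 : x = xs
      · simp [Lg, hx1, hx2, Ne.symm hexs]
      · simp [Lg, hx1, hx2]
  have hmB : ok n r (pt (Rg gε u₁ u₂ u₃ none (some u₂) (some u₁)) *
      pt (Rg gε u₁ u₂ u₃ (some ts) (some u₃) none)) := by rw [prodν]; exact okRm
  have hlB : ok n r (pt (Lg gε u₁ u₃ {e₀} {xs}) *
      pt (Rg gε u₁ u₂ u₃ none (some u₂) (some u₁))) := by rw [prodm]; exact hfstS
  have stepB2 : ConGen.Rel (PTRel n (r+2) (r+1))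
      (W (pt (Lg gε u₁ u₃ {e₀} {xs})) okLam1 *
        W (pt (Rg gε u₁ u₂ u₃ none (some u₃) (some ts))) okRm)
      (W (pt (Lg gε u₁ u₃ {xs} ∅)) hfstS *
        W (pt (Rg gε u₁ u₂ u₃ (some ts) (some u₃) none)) hsndS) := by
    have h := moveR okLam1 okν hsndS hmB hlB
    rwa [W_eq hmB okRm prodν, W_eq hlB hfstS prodm] at h
  exact stepB1.trans stepB2

include hT in
lemma dichotomy (a b : PTn n) (hab : a * b = pt gε) (ha : ptrank a = r + 1) :
    (∃ a₀ x, og a x = some a₀ ∧ og b a₀ = none ∧ gε x = none) ∨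
    (∃ a₁ a₂ t₀, (∃ x, og a x = some a₁) ∧ (∃ x, og a x = some a₂) ∧ a₁ ≠ a₂ ∧
      og b a₁ = some t₀ ∧ og b a₂ = some t₀ ∧
      (∃ x y, x ≠ y ∧ gε x = some t₀ ∧ gε y = some t₀)) := by
  classical
  set ga := og a with hga_def
  set gb := og b with hgb_def
  have ea : pt ga = a := pt_og a
  have eb : pt gb = b := pt_og b
  have hg : (fun x => (ga x).bind gb) = gε := by
    apply pt_injective
    rw [← pt_mul, ea, eb, hab]
  have hgx : ∀ x, gε x = (ga x).bind gb := fun x => (congrFun hg x).symm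
  have hAcard : (img ga).card = r + 1 := by rw [← rank_pt, ea]; exact ha
  by_cases hex : ∃ w ∈ img ga, gb w = none
  · obtain ⟨w, hwA, hwb⟩ := hex
    obtain ⟨x, hx⟩ := mem_img.1 hwA
    refine Or.inl ⟨w, x, hx, hwb, ?_⟩
    rw [hgx x, hx, Option.bind_some, hwb]
  · push_neg at hex
    have hmap : ∀ w ∈ img ga, (fun w => (gb w).getD w) w ∈ img gε := by
      intro w hw
      cases hgb : gb w with
      | none => exact absurd hgb (hex w hw)
      | some t =>
        obtain ⟨x, hx⟩ := mem_img.1 hw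
        have : gε x = some t := by rw [hgx x, hx, Option.bind_some, hgb]
        simpa [hgb] using mem_img.2 ⟨x, this⟩
    have hlt : (img gε).card < (img ga).card := by omega
    obtain ⟨a₁, ha₁, a₂, ha₂, hne, hfeq⟩ :=
      exists_ne_map_eq_of_card_lt_of_maps_to hlt hmap
    cases hgb₁ : gb a₁ with
    | none => exact absurd hgb₁ (hex a₁ ha₁)
    | some t₁ =>
      cases hgb₂ : gb a₂ with
      | none => exact absurd hgb₂ (hex a₂ ha₂)
      | some t₂ =>
        have ht12 : t₁ = t₂ := by simpa [hgb₁, hgb₂] using hfeq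
        subst ht12
        obtain ⟨x₁, hx₁⟩ := mem_img.1 ha₁
        obtain ⟨x₂, hx₂⟩ := mem_img.1 ha₂
        refine Or.inr ⟨a₁, a₂, t₁, ⟨x₁, hx₁⟩, ⟨x₂, hx₂⟩, hne, hgb₁, hgb₂,
          ⟨x₁, x₂, ?_, ?_, ?_⟩⟩
        · intro hc
          rw [hc, hx₂] at hx₁
          exact hne (Option.some.inj hx₁).symm
        · rw [hgx x₁, hx₁, Option.bind_some, hgb₁]
        · rw [hgx x₂, hx₂, Option.bind_some, hgb₂]

include hT hu₁ hu₂ hu₃ h12 h13 h23 in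
lemma okNFsndJ : ok n r (pt (Rg gε u₁ u₂ u₃ none (some u₃) none)) :=
  ⟨rank_Rg_ge hu₁ hu₂ hu₃ h12 h13 h23 hT u₃ hu₃ (Or.inr (Or.inl rfl)),
    rank_Rg_le hT u₃ u₃ (fun z hz => by cases hz)
      (fun z hz => Or.inl (Option.some.inj hz).symm) (fun z hz => by cases hz)⟩

include hT hu₁ hu₂ hu₃ h12 h13 h23 in
lemma okNFsndS (ts : Fin n) (hts : ts ∈ img gε) :
    ok n r (pt (Rg gε u₁ u₂ u₃ (some ts) (some u₃) none)) :=
  ⟨rank_Rg_ge hu₁ hu₂ hu₃ h12 h13 h23 hT u₃ hu₃ (Or.inr (Or.inl rfl)),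
    rank_Rg_le hT u₃ u₃ (fun z hz => Or.inr (Or.inr ((Option.some.inj hz) ▸ hts)))
      (fun z hz => Or.inl (Option.some.inj hz).symm) (fun z hz => by cases hz)⟩

include hT hu₁ hu₃ in
lemma okNFfstJ (e₀ : Fin n) (he₀ : gε e₀ = none) :
    ok n r (pt (Lg gε u₁ u₃ {e₀} ∅)) := by
  constructor
  · refine rank_Lg_ge_full hT ?_ (Or.inl ⟨e₀, mem_singleton_self _⟩) hu₁ hu₃
    intro t ht
    obtain ⟨x, hx⟩ := mem_img.1 ht
    refine ⟨x, ?_, fun h => (notMem_empty x h), hx⟩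
    simp only [mem_singleton]
    intro hc
    rw [hc, he₀] at hx; cases hx
  · exact rank_Lg_le hT _ _

include hT hu₁ hu₃ in
lemma okNFfstS (ts xs xp : Fin n) (hxs : gε xs = some ts) (hxp : gε xp = some ts)
    (hxsp : xs ≠ xp) : ok n r (pt (Lg gε u₁ u₃ {xs} ∅)) := by
  constructor
  · refine rank_Lg_ge_full hT ?_ (Or.inl ⟨xs, mem_singleton_self _⟩) hu₁ hu₃
    intro t ht
    by_cases htts : t = ts
    · refine ⟨xp, ?_, fun h => (notMem_empty xp h), htts ▸ hxp⟩
      simp only [mem_singleton]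
      exact fun hc => hxsp hc.symm
    · obtain ⟨x, hx⟩ := mem_img.1 ht
      refine ⟨x, ?_, fun h => (notMem_empty x h), hx⟩
      simp only [mem_singleton]
      intro hc
      rw [hc, hxs] at hx
      exact htts (Option.some.inj hx).symm
  · exact rank_Lg_le hT _ _

end Chains

end Stmt16

/-- In the partial transformation monoid, if `α, β, γ, δ` have rank `r + 1`, `αβ = γδ`
and `rank (αβ) = r`, then `x_α x_β = x_γ x_δ` is a consequence of the Cayley relations
among elements of rank `r + 1` and `r + 2` (assuming `m < n` and `r + n + 1 ≤ 2m`). -/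
theorem stmt_16 (n m r : ℕ) (hm : m < n) (hr : r + n + 1 ≤ 2 * m)
    (α β γ δ : PTn n)
    (hα : ptrank α = r + 1) (hβ : ptrank β = r + 1)
    (hγ : ptrank γ = r + 1) (hδ : ptrank δ = r + 1)
    (heq : α * β = γ * δ) (hrank : ptrank (α * β) = r) :
    conGen (PTRel n (r + 2) (r + 1))
      (FreeSemigroup.of (⟨α, by omega⟩ : PTX n (r + 2) (r + 1)) *
        FreeSemigroup.of (⟨β, by omega⟩ : PTX n (r + 2) (r + 1)))
      (FreeSemigroup.of (⟨γ, by omega⟩ : PTX n (r + 2) (r + 1)) *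
        FreeSemigroup.of (⟨δ, by omega⟩ : PTX n (r + 2) (r + 1))) := by
  classical
  open Stmt16 Finset in
  have hn3 : r + 3 ≤ n := by omega
  set gε := og (α * β) with hgεdef
  have hptε : pt gε = α * β := pt_og _
  have hT : (img gε).card = r := by rw [← rank_pt, hptε]; exact hrank
  have hscard : 3 ≤ (univ \ img gε).card := by
    rw [card_sdiff_of_subset (subset_univ _), card_univ, Fintype.card_fin]
    omega
  obtain ⟨u₁, hu₁s⟩ := card_pos.1 (show 0 < (univ \ img gε).card by omega)
  obtain ⟨u₂, hu₂s⟩ := card_pos.1 (show 0 < ((univ \ img gε).erase u₁).card by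
    rw [card_erase_of_mem hu₁s]; omega)
  obtain ⟨u₃, hu₃s⟩ := card_pos.1
    (show 0 < (((univ \ img gε).erase u₁).erase u₂).card by
      rw [card_erase_of_mem hu₂s, card_erase_of_mem hu₁s]; omega)
  obtain ⟨h32, hu₃s'⟩ := mem_erase.1 hu₃s
  obtain ⟨h31, hu₃s''⟩ := mem_erase.1 hu₃s'
  obtain ⟨h21, hu₂s'⟩ := mem_erase.1 hu₂s
  have hu₁ : u₁ ∉ img gε := (mem_sdiff.1 hu₁s).2
  have hu₂ : u₂ ∉ img gε := (mem_sdiff.1 hu₂s').2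
  have hu₃ : u₃ ∉ img gε := (mem_sdiff.1 hu₃s'').2
  have h12 : u₁ ≠ u₂ := h21.symm
  have h13 : u₁ ≠ u₃ := h31.symm
  have h23 : u₂ ≠ u₃ := h32.symm
  have okA : ok n r α := ⟨hα.ge, hα.le.trans (by omega)⟩
  have okB : ok n r β := ⟨hβ.ge, hβ.le.trans (by omega)⟩
  have okC : ok n r γ := ⟨hγ.ge, hγ.le.trans (by omega)⟩
  have okD : ok n r δ := ⟨hδ.ge, hδ.le.trans (by omega)⟩
  have habα : α * β = pt gε := hptε.symm
  have habγ : γ * δ = pt gε := (hptε.trans heq).symm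
  have hsndJ := okNFsndJ hT hu₁ hu₂ hu₃ h12 h13 h23
  show ConGen.Rel (PTRel n (r+2) (r+1)) (W α okA * W β okB) (W γ okC * W δ okD)
  by_cases hsplit : ∃ t x y, x ≠ y ∧ gε x = some t ∧ gε y = some t
  · obtain ⟨ts, xs, xp, hxsp, hxs, hxp⟩ := hsplit
    have hfstS := okNFfstS hT hu₁ hu₃ ts xs xp hxs hxp hxsp
    have hsndS := okNFsndS hT hu₁ hu₂ hu₃ h12 h13 h23 ts (mem_img.2 ⟨xs, hxs⟩)
    have side : ∀ (a b : PTn n) (hA : ok n r a) (hB : ok n r b),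
        a * b = pt gε → ptrank a = r + 1 → ptrank b = r + 1 →
        ConGen.Rel (PTRel n (r+2) (r+1)) (W a hA * W b hB)
          (W (pt (Lg gε u₁ u₃ {xs} ∅)) hfstS *
            W (pt (Rg gε u₁ u₂ u₃ (some ts) (some u₃) none)) hsndS) := by
      intro a b hA hB hab ha hb
      rcases dichotomy hT a b hab ha with
        ⟨a₀, x₀, hc1, hc2, hc3⟩ | ⟨a₁, a₂, t₀, hi1, hi2, hi3, hi4, hi5, _⟩
      · have hfstJ := okNFfstJ hT hu₁ hu₃ x₀ hc3
        exact (keyII hT hu₁ hu₂ hu₃ h12 h13 h23 a b hA hB hab hb a₀ ⟨x₀, hc1⟩ hc2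
            x₀ hc3 hfstJ hsndJ).trans
          (bridge hT hu₁ hu₂ hu₃ h12 h13 h23 x₀ hc3 ts xs xp hxs hxp hxsp
            hfstJ hsndJ hfstS hsndS)
      · exact keyI hT hu₁ hu₂ hu₃ h12 h13 h23 a b hA hB hab hb a₁ a₂ t₀ hi1 hi2
          hi3 hi4 hi5 ts xs xp hxs hxp hxsp hfstS hsndS
    exact (side α β okA okB habα hα hβ).trans
      (ConGen.Rel.symm (side γ δ okC okD habγ hγ hδ))
  · have side : ∀ (a b : PTn n), a * b = pt gε → ptrank a = r + 1 →
        ∃ a₀ x, og a x = some a₀ ∧ og b a₀ = none ∧ gε x = none := by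
      intro a b hab ha
      rcases dichotomy hT a b hab ha with h | ⟨a₁, a₂, t₀, _, _, _, _, _, hsp⟩
      · exact h
      · exact absurd ⟨t₀, hsp⟩ hsplit
    obtain ⟨a₀, x₀, hc1, hc2, hc3⟩ := side α β habα hα
    obtain ⟨c₀, y₀, hd1, hd2, hd3⟩ := side γ δ habγ hγ
    have hfstJ := okNFfstJ hT hu₁ hu₃ x₀ hc3
    exact (keyII hT hu₁ hu₂ hu₃ h12 h13 h23 α β okA okB habα hβ a₀ ⟨x₀, hc1⟩ hc2
        x₀ hc3 hfstJ hsndJ).trans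
      (ConGen.Rel.symm (keyII hT hu₁ hu₂ hu₃ h12 h13 h23 γ δ okC okD habγ hδ c₀
        ⟨y₀, hd1⟩ hd2 x₀ hc3 hfstJ hsndJ))
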